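/- For any finite simple graph G, the fractional matching number of G equals (|V(G)| - max over S ⊆ V(G) of (i(G - S) - |S|))/2, where i(G - S) denotes the number of isolated vertices of the graph G - S. -/

import Mathlib

open Finset

variable {V : Type*}

/-- A fractional matching of `G`: a `[0,1]`-valued weight on edges (zero outside the
edge set) such that the total weight at each vertex is at most `1`. -/
def IsFracMatching [Fintype V] [DecidableEq V] (G : SimpleGraph V) [DecidableRel G.Adj]
    (f : Sym2 V → ℝ) : Prop :=
  (∀ e, 0 ≤ f e ∧ f e ≤ 1) ∧ (∀ e, e ∉ G.edgeSet → f e = 0) ∧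
  ∀ v : V, ∑ e ∈ G.edgeFinset, (if v ∈ e then f e else 0) ≤ 1

/-- The fractional matching number of `G`. -/
noncomputable def fracMatchingNumber [Fintype V] [DecidableEq V] (G : SimpleGraph V)
    [DecidableRel G.Adj] : ℝ :=
  sSup {x : ℝ | ∃ f, IsFracMatching G f ∧ ∑ e ∈ G.edgeFinset, f e = x}

/-- `isoCount G S` is the number of isolated vertices of the induced subgraph `G - S`. -/
def isoCount [Fintype V] [DecidableEq V] (G : SimpleGraph V) [DecidableRel G.Adj]
    (S : Finset V) : ℕ :=
  (Finset.univ.filter (fun v => v ∉ S ∧ ∀ u ∉ S, ¬ G.Adj v u)).card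

section aux
variable [Fintype V] [DecidableEq V] (G : SimpleGraph V) [DecidableRel G.Adj]

lemma loadsum (f : Sym2 V → ℝ) (X : Finset V) :
    ∑ v ∈ X, ∑ e ∈ G.edgeFinset, (if v ∈ e then f e else 0)
      = ∑ e ∈ G.edgeFinset, f e * (X.filter (· ∈ e)).card := by
  rw [Finset.sum_comm]
  refine Finset.sum_congr rfl fun e _ => ?_
  rw [← Finset.sum_filter, Finset.sum_const, nsmul_eq_mul, mul_comm]

/-- Easy direction: every fractional matching is bounded by the Berge-Tutte value. -/
lemma frac_le {f : Sym2 V → ℝ} (hf : IsFracMatching G f) (S : Finset V) :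
    ∑ e ∈ G.edgeFinset, f e ≤ ((Fintype.card V : ℝ) + S.card - isoCount G S) / 2 := by
  obtain ⟨hf01, hf0, hfv⟩ := hf
  set I : Finset V := Finset.univ.filter (fun v => v ∉ S ∧ ∀ u ∉ S, ¬ G.Adj v u) with hI
  set B : Finset V := (Finset.univ \ S) \ I with hB
  -- per-edge coefficient bound
  have key : ∀ e ∈ G.edgeFinset,
      (2:ℝ) * f e ≤ f e * (2 * (S.filter (· ∈ e)).card + (B.filter (· ∈ e)).card) := by
    intro e he
    induction e using Sym2.ind with
    | _ a b =>
      rw [SimpleGraph.mem_edgeFinset, SimpleGraph.mem_edgeSet] at he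
      have hab : a ≠ b := he.ne
      have hcoef : (2:ℝ) ≤ 2 * (S.filter (· ∈ s(a,b))).card + (B.filter (· ∈ s(a,b))).card := by
        by_cases hS : a ∈ S ∨ b ∈ S
        · have h1 : 1 ≤ (S.filter (· ∈ s(a,b))).card := by
            rcases hS with h | h
            · exact Finset.card_pos.2 ⟨a, Finset.mem_filter.2 ⟨h, by simp⟩⟩
            · exact Finset.card_pos.2 ⟨b, Finset.mem_filter.2 ⟨h, by simp⟩⟩
          have h1' : (1:ℝ) ≤ (S.filter (· ∈ s(a,b))).card := by exact_mod_cast h1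
          linarith [Nat.cast_nonneg (α := ℝ) (B.filter (· ∈ s(a,b))).card]
        · push_neg at hS
          have haB : a ∈ B := by
            simp only [hB, Finset.mem_sdiff, Finset.mem_univ, true_and, hI,
              Finset.mem_filter]
            exact ⟨hS.1, fun h => (h.2 b hS.2) he⟩
          have hbB : b ∈ B := by
            simp only [hB, Finset.mem_sdiff, Finset.mem_univ, true_and, hI,
              Finset.mem_filter]
            exact ⟨hS.2, fun h => (h.2 a hS.1) he.symm⟩
          have h2 : 2 ≤ (B.filter (· ∈ s(a,b))).card := by
            have : ({a, b} : Finset V) ⊆ B.filter (· ∈ s(a,b)) := by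
              intro x hx
              rcases Finset.mem_insert.1 hx with rfl | hx
              · exact Finset.mem_filter.2 ⟨haB, by simp⟩
              · rw [Finset.mem_singleton] at hx; subst hx
                exact Finset.mem_filter.2 ⟨hbB, by simp⟩
            calc 2 = ({a,b} : Finset V).card := (Finset.card_pair hab).symm
            _ ≤ _ := Finset.card_le_card this
          have h2' : (2:ℝ) ≤ (B.filter (· ∈ s(a,b))).card := by exact_mod_cast h2
          linarith [Nat.cast_nonneg (α := ℝ) (S.filter (· ∈ s(a,b))).card]
      rw [mul_comm]
      exact mul_le_mul_of_nonneg_left hcoef (hf01 _).1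
  have hsum : (2:ℝ) * ∑ e ∈ G.edgeFinset, f e
      ≤ 2 * S.card + B.card := by
    have h1 : (2:ℝ) * ∑ e ∈ G.edgeFinset, f e ≤
        ∑ e ∈ G.edgeFinset, f e * (2 * (S.filter (· ∈ e)).card + (B.filter (· ∈ e)).card) := by
      rw [Finset.mul_sum]
      exact Finset.sum_le_sum key
    have h2 : ∑ e ∈ G.edgeFinset, f e * (2 * (S.filter (· ∈ e)).card + (B.filter (· ∈ e)).card)
        = 2 * (∑ v ∈ S, ∑ e ∈ G.edgeFinset, (if v ∈ e then f e else 0))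
          + ∑ v ∈ B, ∑ e ∈ G.edgeFinset, (if v ∈ e then f e else 0) := by
      rw [loadsum, loadsum, Finset.mul_sum, ← Finset.sum_add_distrib]
      exact Finset.sum_congr rfl fun e _ => by ring
    have h3 : ∑ v ∈ S, ∑ e ∈ G.edgeFinset, (if v ∈ e then f e else 0) ≤ (S.card : ℝ) := by
      calc _ ≤ ∑ v ∈ S, (1:ℝ) := Finset.sum_le_sum fun v _ => hfv v
      _ = S.card := by simp
    have h4 : ∑ v ∈ B, ∑ e ∈ G.edgeFinset, (if v ∈ e then f e else 0) ≤ (B.card : ℝ) := by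
      calc _ ≤ ∑ v ∈ B, (1:ℝ) := Finset.sum_le_sum fun v _ => hfv v
      _ = B.card := by simp
    linarith
  have hIc : I ⊆ Finset.univ \ S := by
    intro v hv
    simp only [hI, Finset.mem_filter] at hv
    simp [hv.2.1]
  have hcards : B.card + I.card + S.card = Fintype.card V := by
    have e1 : B.card = (Finset.univ \ S).card - I.card := by rw [hB, Finset.card_sdiff_of_subset hIc]
    have e2 : (Finset.univ \ S).card = Fintype.card V - S.card := by
      rw [Finset.card_sdiff_of_subset (Finset.subset_univ S), Finset.card_univ]
    have e3 : I.card ≤ (Finset.univ \ S).card := Finset.card_le_card hIc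
    have e4 : S.card ≤ Fintype.card V := by
      rw [← Finset.card_univ]; exact Finset.card_le_card (Finset.subset_univ S)
    omega
  have hiso : (isoCount G S : ℝ) = I.card := by rw [hI]; rfl
  have hcards' : (B.card : ℝ) + I.card + S.card = Fintype.card V := by exact_mod_cast hcards
  rw [hiso]
  linarith


/-- Hall-type deficiency bound: for every `A`, the deficiency `|A| - |N(A)|` is at most
the isolated-vertex deficiency for some `S`. -/
lemma hallCond (A : Finset V) :
    ∃ S : Finset V, (A.card : ℝ) ≤ ((A.biUnion (fun v => G.neighborFinset v)).card : ℝ)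
      + ((isoCount G S : ℝ) - S.card) := by
  classical
  set NA := A.biUnion (fun v => G.neighborFinset v) with hNA
  set A' := A \ NA with hA'
  set S := A'.biUnion (fun v => G.neighborFinset v) with hS
  refine ⟨S, ?_⟩
  have hSsub : S ⊆ NA \ A := by
    intro v hv
    rw [hS, Finset.mem_biUnion] at hv
    obtain ⟨u, hu, hadj⟩ := hv
    rw [hA', Finset.mem_sdiff] at hu
    rw [SimpleGraph.mem_neighborFinset] at hadj
    refine Finset.mem_sdiff.2 ⟨?_, ?_⟩
    · exact Finset.mem_biUnion.2 ⟨u, hu.1, (SimpleGraph.mem_neighborFinset _ _ _).2 hadj⟩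
    · intro hvA
      exact hu.2 (Finset.mem_biUnion.2 ⟨v, hvA, (SimpleGraph.mem_neighborFinset _ _ _).2 hadj.symm⟩)
  have hiso : A'.card ≤ isoCount G S := by
    apply Finset.card_le_card
    intro v hv
    rw [hA', Finset.mem_sdiff] at hv
    refine Finset.mem_filter.2 ⟨Finset.mem_univ v, ?_, ?_⟩
    · intro hvS
      exact (Finset.mem_sdiff.1 (hSsub hvS)).2 hv.1
    · intro u hu hadj
      exact hu (Finset.mem_biUnion.2 ⟨v, by rw [hA', Finset.mem_sdiff]; exact hv,
        (SimpleGraph.mem_neighborFinset _ _ _).2 hadj⟩)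
  have c1 : A'.card + (A ∩ NA).card = A.card := by
    rw [hA']; exact Finset.card_sdiff_add_card_inter A NA
  have c2 : (NA \ A).card + (NA ∩ A).card = NA.card := Finset.card_sdiff_add_card_inter NA A
  have c3 : (A ∩ NA).card = (NA ∩ A).card := by rw [Finset.inter_comm]
  have c4 : S.card ≤ (NA \ A).card := Finset.card_le_card hSsub
  have : (A.card : ℤ) ≤ NA.card + ((isoCount G S : ℤ) - S.card) := by omega
  exact_mod_cast this

lemma construct (D : ℕ)
    (hH : ∀ A : Finset V, A.card ≤ (A.biUnion (fun v => G.neighborFinset v)).card + D) :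
    ∃ f, IsFracMatching G f ∧ ((Fintype.card V : ℝ) - D) / 2 ≤ ∑ e ∈ G.edgeFinset, f e := by
  classical
  set t : V → Finset (V ⊕ Fin D) :=
    fun v => ((G.neighborFinset v).image Sum.inl) ∪ (Finset.univ.image Sum.inr) with ht
  have hall : ∀ s : Finset V, s.card ≤ (s.biUnion t).card := by
    intro s
    rcases s.eq_empty_or_nonempty with rfl | ⟨v0, hv0⟩
    · simp
    have hdisj : Disjoint ((s.biUnion (fun v => G.neighborFinset v)).image Sum.inl)
        ((Finset.univ : Finset (Fin D)).image Sum.inr) := by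
      rw [Finset.disjoint_left]
      intro x hx hx'
      simp only [Finset.mem_image] at hx hx'
      obtain ⟨a, _, rfl⟩ := hx
      obtain ⟨b, _, hb⟩ := hx'
      exact Sum.inl_ne_inr hb.symm
    have hsub : ((s.biUnion (fun v => G.neighborFinset v)).image Sum.inl)
        ∪ ((Finset.univ : Finset (Fin D)).image Sum.inr) ⊆ s.biUnion t := by
      intro x hx
      rcases Finset.mem_union.1 hx with hx | hx
      · simp only [Finset.mem_image] at hx
        obtain ⟨w, hw, rfl⟩ := hx
        obtain ⟨v, hv, hw'⟩ := Finset.mem_biUnion.1 hw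
        exact Finset.mem_biUnion.2 ⟨v, hv, Finset.mem_union_left _
          (Finset.mem_image.2 ⟨w, hw', rfl⟩)⟩
      · exact Finset.mem_biUnion.2 ⟨v0, hv0, Finset.mem_union_right _ hx⟩
    have hcu : (((s.biUnion (fun v => G.neighborFinset v)).image Sum.inl)
        ∪ ((Finset.univ : Finset (Fin D)).image Sum.inr)).card
        = (s.biUnion (fun v => G.neighborFinset v)).card + D := by
      rw [Finset.card_union_of_disjoint hdisj,
        Finset.card_image_of_injective _ Sum.inl_injective,
        Finset.card_image_of_injective _ Sum.inr_injective, Finset.card_univ,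
        Fintype.card_fin]
    calc s.card ≤ (s.biUnion (fun v => G.neighborFinset v)).card + D := hH s
    _ = _ := hcu.symm
    _ ≤ _ := Finset.card_le_card hsub
  obtain ⟨F, hFinj, hFt⟩ := (Finset.all_card_le_biUnion_card_iff_exists_injective t).1 hall
  set m : V → V := fun v => Sum.elim id (fun _ => v) (F v) with hm
  set T : Finset V := Finset.univ.filter (fun v => (F v).isLeft) with hT
  have hFm : ∀ v ∈ T, F v = Sum.inl (m v) := by
    intro v hv
    rw [hT, Finset.mem_filter] at hv
    obtain ⟨w, hw⟩ := Sum.isLeft_iff.1 hv.2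
    rw [hm]; simp [hw]
  have hadj : ∀ v ∈ T, G.Adj v (m v) := by
    intro v hv
    have := hFt v
    rw [hFm v hv, ht] at this
    rcases Finset.mem_union.1 this with h | h
    · simp only [Finset.mem_image] at h
      obtain ⟨w, hw, hw'⟩ := h
      rw [Sum.inl.injEq] at hw'
      subst hw'
      exact (SimpleGraph.mem_neighborFinset _ _ _).1 hw
    · simp only [Finset.mem_image] at h
      obtain ⟨d, _, hd⟩ := h
      exact absurd hd.symm Sum.inl_ne_inr
  have hmInj : ∀ x ∈ T, ∀ y ∈ T, m x = m y → x = y := by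
    intro x hx y hy hxy
    apply hFinj
    rw [hFm x hx, hFm y hy, hxy]
  have hTcard : ((Fintype.card V : ℝ) - D) ≤ T.card := by
    have h1 : (Finset.univ \ T).card ≤ D := by
      have : (Finset.univ \ T).card ≤ ((Finset.univ : Finset (Fin D)).image (Sum.inr : Fin D → V ⊕ Fin D)).card := by
        apply Finset.card_le_card_of_injOn F
        · intro v hv
          rw [Finset.mem_coe, Finset.mem_sdiff] at hv
          cases hFv : F v with
          | inl w =>
            exfalso
            apply hv.2
            rw [hT, Finset.mem_filter]
            exact ⟨Finset.mem_univ v, by rw [hFv]; rfl⟩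
          | inr d =>
            exact Finset.mem_image.2 ⟨d, Finset.mem_univ d, rfl⟩
        · exact Function.Injective.injOn hFinj
      calc _ ≤ _ := this
      _ = D := by rw [Finset.card_image_of_injective _ Sum.inr_injective,
            Finset.card_univ, Fintype.card_fin]
    have h2 : T.card + (Finset.univ \ T).card = Fintype.card V := by
      rw [Finset.card_sdiff_of_subset (Finset.subset_univ T), Finset.card_univ]
      have := Finset.card_le_card (Finset.subset_univ T)
      rw [Finset.card_univ] at this
      omega
    have h1' : ((Finset.univ \ T).card : ℝ) ≤ D := by exact_mod_cast h1
    have h2' : (T.card : ℝ) + ((Finset.univ \ T).card : ℝ) = Fintype.card V := by exact_mod_cast h2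
    linarith
  -- the fractional matching
  refine ⟨fun e => ((T.filter (fun x => s(x, m x) = e)).card : ℝ) / 2, ⟨?_, ?_, ?_⟩, ?_⟩
  · -- bounds 0 ≤ f e ≤ 1
    intro e
    constructor
    · positivity
    · beta_reduce
      induction e using Sym2.ind with
    | _ a b =>
      have hsub : T.filter (fun x => s(x, m x) = s(a, b)) ⊆ {a, b} := by
        intro x hx
        have hx' := (Finset.mem_filter.1 hx).2
        have : x ∈ s(a, b) := by rw [← hx']; exact Sym2.mem_mk_left x (m x)
        rw [Sym2.mem_iff] at this
        rcases this with rfl | rfl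
        · exact Finset.mem_insert_self _ _
        · exact Finset.mem_insert_of_mem (Finset.mem_singleton_self _)
      have : (T.filter (fun x => s(x, m x) = s(a, b))).card ≤ 2 := by
        calc _ ≤ ({a, b} : Finset V).card := Finset.card_le_card hsub
        _ ≤ 2 := (Finset.card_insert_le a {b}).trans (by simp)
      have : ((T.filter (fun x => s(x, m x) = s(a, b))).card : ℝ) ≤ 2 := by exact_mod_cast this
      linarith
  · -- zero off edges
    intro e he
    have : T.filter (fun x => s(x, m x) = e) = ∅ := by
      rw [Finset.filter_eq_empty_iff]
      intro x hx hc
      exact he (by rw [← hc]; exact (G.mem_edgeSet).2 (hadj x hx))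
    beta_reduce
    rw [this]; simp
  · -- vertex constraint
    intro v
    beta_reduce
    set T' : Finset V := T.filter (fun x => v ∈ s(x, m x)) with hT'
    have step1 : ∑ e ∈ G.edgeFinset, (if v ∈ e then ((T.filter (fun x => s(x, m x) = e)).card : ℝ) / 2 else 0)
        = ∑ e ∈ G.edgeFinset, ((T'.filter (fun x => s(x, m x) = e)).card : ℝ) / 2 := by
      refine Finset.sum_congr rfl fun e he => ?_
      by_cases hv : v ∈ e
      · rw [if_pos hv]
        have hfe : T.filter (fun x => s(x, m x) = e) = T'.filter (fun x => s(x, m x) = e) := by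
          ext x
          simp only [hT', Finset.mem_filter]
          constructor
          · rintro ⟨h1, h3⟩; exact ⟨⟨h1, by rw [h3]; exact hv⟩, h3⟩
          · rintro ⟨⟨h1, h2⟩, h3⟩; exact ⟨h1, h3⟩
        rw [hfe]
      · rw [if_neg hv]
        have : T'.filter (fun x => s(x, m x) = e) = ∅ := by
          rw [Finset.filter_eq_empty_iff]
          intro x hx hc
          exact hv (by rw [← hc]; exact (Finset.mem_filter.1 hx).2)
        rw [this]; simp
    have fiber : ∑ e ∈ G.edgeFinset, ((T'.filter (fun x => s(x, m x) = e)).card : ℝ) = T'.card := by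
      have := Finset.card_eq_sum_card_fiberwise
        (f := fun x => s(x, m x)) (s := T') (t := G.edgeFinset)
        (fun x hx => SimpleGraph.mem_edgeFinset.2 ((G.mem_edgeSet).2 (hadj x (Finset.mem_filter.1 hx).1)))
      exact_mod_cast this.symm
    have hT'2 : T'.card ≤ 2 := by
      have hsub : T' ⊆ insert v (T.filter (fun x => m x = v)) := by
        intro x hx
        obtain ⟨hxT, hxv⟩ := Finset.mem_filter.1 hx
        rw [Sym2.mem_iff] at hxv
        rcases hxv with rfl | h
        · exact Finset.mem_insert_self _ _
        · exact Finset.mem_insert_of_mem (Finset.mem_filter.2 ⟨hxT, h.symm⟩)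
      have hone : (T.filter (fun x => m x = v)).card ≤ 1 := by
        rw [Finset.card_le_one]
        intro a ha b hb
        obtain ⟨haT, hav⟩ := Finset.mem_filter.1 ha
        obtain ⟨hbT, hbv⟩ := Finset.mem_filter.1 hb
        exact hmInj a haT b hbT (hav.trans hbv.symm)
      calc T'.card ≤ _ := Finset.card_le_card hsub
      _ ≤ (T.filter (fun x => m x = v)).card + 1 := Finset.card_insert_le _ _
      _ ≤ 2 := by omega
    rw [step1, ← Finset.sum_div, fiber]
    have : (T'.card : ℝ) ≤ 2 := by exact_mod_cast hT'2
    linarith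
  · -- total value
    beta_reduce
    have fiber : ∑ e ∈ G.edgeFinset, ((T.filter (fun x => s(x, m x) = e)).card : ℝ) = T.card := by
      have := Finset.card_eq_sum_card_fiberwise
        (f := fun x => s(x, m x)) (s := T) (t := G.edgeFinset)
        (fun x hx => SimpleGraph.mem_edgeFinset.2 ((G.mem_edgeSet).2 (hadj x hx)))
      exact_mod_cast this.symm
    rw [← Finset.sum_div, fiber]
    linarith

end aux

/-- Fractional Berge–Tutte formula: `μ_f(G) = (|V| - max_S (i(G-S) - |S|)) / 2`. -/
theorem stmt_6 [Fintype V] [DecidableEq V] (G : SimpleGraph V) [DecidableRel G.Adj] :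
    fracMatchingNumber G =
      ((Fintype.card V : ℝ) -
        (Finset.univ : Finset (Finset V)).sup' ⟨∅, Finset.mem_univ ∅⟩
          (fun S => (isoCount G S : ℝ) - S.card)) / 2 := by
  classical
  set d : ℝ := (Finset.univ : Finset (Finset V)).sup' ⟨∅, Finset.mem_univ ∅⟩
      (fun S => (isoCount G S : ℝ) - S.card) with hd
  have hdub : ∀ S : Finset V, (isoCount G S : ℝ) - S.card ≤ d := fun S => by
    rw [hd]; exact Finset.le_sup' (fun S => (isoCount G S : ℝ) - S.card) (Finset.mem_univ S)
  obtain ⟨S0, -, hS0⟩ := Finset.exists_mem_eq_sup' (α := ℝ)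
    (⟨∅, Finset.mem_univ ∅⟩ : (Finset.univ : Finset (Finset V)).Nonempty)
    (fun S => (isoCount G S : ℝ) - S.card)
  rw [← hd] at hS0
  have hd0 : (0:ℝ) ≤ d := le_trans (by simp) (hdub ∅)
  have hle : (S0.card : ℝ) ≤ isoCount G S0 := by
    have := hS0; linarith
  have hleN : S0.card ≤ isoCount G S0 := by exact_mod_cast hle
  have hD : ((isoCount G S0 - S0.card : ℕ) : ℝ) = d := by
    rw [Nat.cast_sub hleN, hS0]
  set D : ℕ := isoCount G S0 - S0.card with hDdef
  have hall : ∀ A : Finset V, A.card ≤ (A.biUnion (fun v => G.neighborFinset v)).card + D := by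
    intro A
    obtain ⟨S, hS⟩ := hallCond G A
    have h2 := hdub S
    have : (A.card : ℝ) ≤ ((A.biUnion (fun v => G.neighborFinset v)).card : ℝ) + D := by
      rw [hD]; linarith
    exact_mod_cast this
  obtain ⟨f, hf, hval⟩ := construct G D hall
  have hub : ∀ x ∈ {x : ℝ | ∃ f, IsFracMatching G f ∧ ∑ e ∈ G.edgeFinset, f e = x},
      x ≤ ((Fintype.card V : ℝ) - d) / 2 := by
    rintro x ⟨g, hg, rfl⟩
    have := frac_le G hg S0
    have h0 : d = (isoCount G S0 : ℝ) - S0.card := hS0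
    linarith
  have hne : (0:ℝ) ∈ {x : ℝ | ∃ f, IsFracMatching G f ∧ ∑ e ∈ G.edgeFinset, f e = x} := by
    refine ⟨fun _ => 0, ⟨fun e => by norm_num, fun e _ => rfl, fun v => by simp⟩, by simp⟩
  rw [fracMatchingNumber]
  apply le_antisymm
  · exact csSup_le ⟨0, hne⟩ hub
  · have hmem : (∑ e ∈ G.edgeFinset, f e) ∈
        {x : ℝ | ∃ f, IsFracMatching G f ∧ ∑ e ∈ G.edgeFinset, f e = x} := ⟨f, hf, rfl⟩
    calc ((Fintype.card V : ℝ) - d) / 2 = ((Fintype.card V : ℝ) - D) / 2 := by rw [hD]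
    _ ≤ ∑ e ∈ G.edgeFinset, f e := hval
    _ ≤ _ := le_csSup ⟨((Fintype.card V : ℝ) - d) / 2, hub⟩ hmem
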